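/- If w = g/f where f, g are functions on the lattice with f nowhere zero, satisfying the bilinear equations ĝf̃ − g̃f̂ + (p−q)(f̂f̃ − f·f̂̃) = 0 and g·f̂̃ − ĝ̃f + (p+q)(f·f̂̃ − f̂f̃) = 0, then w satisfies the lpKdV equation (p−q+ŵ−w̃)(p+q+w−ŵ̃) = p²−q². -/
import Mathlib


/-- If `w = g/f` with `f` nowhere zero satisfying the bilinear equations
`ĝf̃ − g̃f̂ + (p−q)(f̂f̃ − f·f̂̃) = 0` and `g·f̂̃ − ĝ̃f + (p+q)(f·f̂̃ − f̂f̃) = 0`,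
then `w` satisfies the lpKdV equation `(p−q+ŵ−w̃)(p+q+w−ŵ̃) = p²−q²`. -/
theorem stmt_16 (p q : ℝ)
    (f g : ℤ → ℤ → ℝ) (hf : ∀ n m : ℤ, f n m ≠ 0)
    (w : ℤ → ℤ → ℝ) (hw : ∀ n m : ℤ, w n m = g n m / f n m)
    (H1 : ∀ n m : ℤ, g n (m+1) * f (n+1) m - g (n+1) m * f n (m+1)
      + (p - q) * (f n (m+1) * f (n+1) m - f n m * f (n+1) (m+1)) = 0)
    (H2 : ∀ n m : ℤ, g n m * f (n+1) (m+1) - g (n+1) (m+1) * f n m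
      + (p + q) * (f n m * f (n+1) (m+1) - f n (m+1) * f (n+1) m) = 0)
    (n m : ℤ) :
    (p - q + w n (m+1) - w (n+1) m) * (p + q + w n m - w (n+1) (m+1)) = p^2 - q^2 := by
  have h1 := H1 n m
  have h2 := H2 n m
  have a := hf n m
  have b := hf (n+1) m
  have c := hf n (m+1)
  have d := hf (n+1) (m+1)
  have e1 : p - q + w n (m+1) - w (n+1) m
      = (p - q) * (f n m * f (n+1) (m+1)) / (f n (m+1) * f (n+1) m) := by
    rw [hw n (m+1), hw (n+1) m]
    field_simp
    linear_combination h1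
  have e2 : p + q + w n m - w (n+1) (m+1)
      = (p + q) * (f n (m+1) * f (n+1) m) / (f n m * f (n+1) (m+1)) := by
    rw [hw n m, hw (n+1) (m+1)]
    field_simp
    linear_combination h2
  rw [e1, e2]
  field_simp
  ring
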